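/- Fix 2 ≤ k ≤ n−2 and let A ⊆ Z/nZ be non-adjacent. Then the collection B = {J : J is a k-subset of Z/nZ and J ≠ C^{(i)} for all i ∈ A}, where C^{(i)} is the cyclic interval of length k starting at i, is the basis family of a matroid, and this matroid is sparse paving with its non-bases precisely the circuit-hyperplanes {C^{(i)} : i ∈ A}. -/

import Mathlib

/-- `B` is the family of bases of a matroid on the whole type `α` as ground set:
it is nonempty and satisfies the basis exchange axiom. -/
def ExchangeFamily {α : Type*} [DecidableEq α] (B : Set (Finset α)) : Prop :=
  B.Nonempty ∧
    ∀ b₁ ∈ B, ∀ b₂ ∈ B, ∀ e ∈ b₁, e ∉ b₂ →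
      ∃ f ∈ b₂, f ∉ b₁ ∧ insert f (b₁.erase e) ∈ B

/-- The cyclic interval `C^{(i)} = {i, i+1, ..., i+k-1}` of length `k` in `ZMod n`. -/
def cyclicInterval (n k : ℕ) (i : ZMod n) : Finset (ZMod n) :=
  (Finset.range k).image fun t : ℕ => i + (t : ZMod n)

/-- A set is independent if it is contained in some basis. -/
def IndepIn {α : Type*} (B : Set (Finset α)) (X : Finset α) : Prop :=
  ∃ b ∈ B, X ⊆ b

/-- The rank of a set `X`: the maximum of `|X ∩ b|` over bases `b`. -/
noncomputable def rkIn {α : Type*} [DecidableEq α] (B : Set (Finset α)) (X : Finset α) : ℕ :=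
  sSup ((fun b => (X ∩ b).card) '' B)

/-- The rank of the matroid: the (common) cardinality of the bases. -/
noncomputable def rankM {α : Type*} (B : Set (Finset α)) : ℕ :=
  sSup (Finset.card '' B)

/-- A circuit: a minimal dependent set. -/
def IsCircuitIn {α : Type*} [DecidableEq α] (B : Set (Finset α)) (C : Finset α) : Prop :=
  ¬ IndepIn B C ∧ ∀ X ⊂ C, IndepIn B X

/-- A flat: every strictly larger set has strictly larger rank. -/
def IsFlatIn {α : Type*} [DecidableEq α] (B : Set (Finset α)) (F : Finset α) : Prop :=
  ∀ G : Finset α, F ⊂ G → rkIn B F < rkIn B G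

/-- A circuit-hyperplane: both a circuit and a flat of rank `rank(M) - 1`. -/
def IsCircuitHyperplaneIn {α : Type*} [DecidableEq α] (B : Set (Finset α))
    (C : Finset α) : Prop :=
  IsCircuitIn B C ∧ IsFlatIn B C ∧ rkIn B C + 1 = rankM B

set_option linter.unusedSectionVars false

section Helpers
variable {n k : ℕ} [NeZero n]

lemma mem_cyclicInterval (hkn : k ≤ n) {i x : ZMod n} :
    x ∈ cyclicInterval n k i ↔ (x - i).val < k := by
  simp only [cyclicInterval, Finset.mem_image, Finset.mem_range]
  constructor
  · rintro ⟨t, ht, rfl⟩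
    have h : i + (t : ZMod n) - i = (t : ZMod n) := by ring
    rw [h, ZMod.val_natCast, Nat.mod_eq_of_lt (lt_of_lt_of_le ht hkn)]
    exact ht
  · intro h
    exact ⟨(x - i).val, h, by rw [ZMod.natCast_zmod_val]; ring⟩

lemma card_cyclicInterval (hkn : k ≤ n) (i : ZMod n) :
    (cyclicInterval n k i).card = k := by
  rw [cyclicInterval, Finset.card_image_of_injOn, Finset.card_range]
  intro s hs t ht hst
  simp only [Finset.coe_range, Set.mem_Iio] at hs ht
  have h := add_left_cancel hst
  have h1 : ((s : ZMod n)).val = s := ZMod.val_cast_of_lt (by omega)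
  have h2 : ((t : ZMod n)).val = t := ZMod.val_cast_of_lt (by omega)
  rw [← h1, ← h2, h]

lemma two_le_sdiff_card (hk : 2 ≤ k) (hkn : k + 2 ≤ n) {i j : ZMod n}
    (hd1 : 2 ≤ (j - i).val) (hd2 : (j - i).val ≤ n - 2) :
    2 ≤ ((cyclicInterval n k i) \ (cyclicInterval n k j)).card := by
  set d := (j - i).val with hdd
  have hdn : d < n := ZMod.val_lt _
  set a := min d k - 1 with ha
  have hj : j = i + ((d : ℕ) : ZMod n) := by
    rw [hdd, ZMod.natCast_zmod_val]; ring
  have hsub : ∀ m : ℕ, m < d → ((i + (m : ZMod n)) - j).val = m + n - d := by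
    intro m hm
    have he : (i + (m : ZMod n)) - j = ((m + n - d : ℕ) : ZMod n) := by
      rw [hj]
      have : ((m + n - d : ℕ) : ZMod n) + ((d : ℕ) : ZMod n) = ((m : ℕ) : ZMod n) := by
        rw [← Nat.cast_add]
        have : m + n - d + d = m + n := by omega
        rw [this, Nat.cast_add, ZMod.natCast_self, add_zero]
      linear_combination -this
    rw [he, ZMod.val_cast_of_lt (by omega)]
  have hmemi : ∀ m : ℕ, m < k → (i + (m : ZMod n)) ∈ cyclicInterval n k i := by
    intro m hm
    rw [mem_cyclicInterval (by omega)]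
    have : i + (m : ZMod n) - i = (m : ZMod n) := by ring
    rw [this, ZMod.val_cast_of_lt (by omega)]
    exact hm
  have hx1 : (i + (a : ZMod n)) ∈ cyclicInterval n k i \ cyclicInterval n k j := by
    rw [Finset.mem_sdiff]
    refine ⟨hmemi a (by omega), ?_⟩
    rw [mem_cyclicInterval (by omega), hsub a (by omega)]
    omega
  have hx2 : (i + ((a - 1 : ℕ) : ZMod n)) ∈ cyclicInterval n k i \ cyclicInterval n k j := by
    rw [Finset.mem_sdiff]
    refine ⟨hmemi (a - 1) (by omega), ?_⟩
    rw [mem_cyclicInterval (by omega), hsub (a - 1) (by omega)]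
    omega
  have hne : (i + (a : ZMod n)) ≠ (i + ((a - 1 : ℕ) : ZMod n)) := by
    intro h
    have h' := add_left_cancel h
    have h1 : ((a : ℕ) : ZMod n).val = a := ZMod.val_cast_of_lt (by omega)
    have h2 : ((a - 1 : ℕ) : ZMod n).val = a - 1 := ZMod.val_cast_of_lt (by omega)
    rw [h'] at h1
    omega
  calc 2 = ({i + (a : ZMod n), i + ((a - 1 : ℕ) : ZMod n)} : Finset (ZMod n)).card := by
        rw [Finset.card_pair hne]
    _ ≤ _ := Finset.card_le_card (by
        intro z hz
        rcases Finset.mem_insert.mp hz with h | h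
        · exact h ▸ hx1
        · exact (Finset.mem_singleton.mp h) ▸ hx2)

lemma key_lemma (hk : 2 ≤ k) (hkn : k + 2 ≤ n) {A : Set (ZMod n)}
    (hA : ∀ i ∈ A, (i + 1) ∉ A ∧ (i - 1) ∉ A) :
    ∀ i ∈ A, ∀ j ∈ A,
      ((cyclicInterval n k i) \ (cyclicInterval n k j)).card ≤ 1 → i = j := by
  intro i hi j hj hcard
  by_contra hne
  have hval : (((j - i).val : ℕ) : ZMod n) = j - i := ZMod.natCast_zmod_val _
  have hv0 : (j - i).val ≠ 0 := by
    intro h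
    rw [ZMod.val_eq_zero, sub_eq_zero] at h
    exact hne h.symm
  have hv1 : (j - i).val ≠ 1 := by
    intro h
    rw [h, Nat.cast_one] at hval
    have hji : j = i + 1 := by linear_combination -hval
    exact (hA i hi).1 (hji ▸ hj)
  have hvn : (j - i).val ≠ n - 1 := by
    intro h
    rw [h] at hval
    have hn1 : ((n - 1 : ℕ) : ZMod n) = -1 := by
      have e : (n - 1) + 1 = n := by omega
      have h2 : (((n - 1) + 1 : ℕ) : ZMod n) = 0 := by rw [e]; exact ZMod.natCast_self n
      rw [Nat.cast_add, Nat.cast_one] at h2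
      linear_combination h2
    rw [hn1] at hval
    have hji : j = i - 1 := by linear_combination -hval
    exact (hA i hi).2 (hji ▸ hj)
  have hlt : (j - i).val < n := ZMod.val_lt _
  have := two_le_sdiff_card hk hkn (i := i) (j := j) (by omega) (by omega)
  omega

end Helpers

section Ext
variable {n k : ℕ} [NeZero n]

/-- Any `(k-1)`-set extends to a basis. -/
lemma exists_extend (hk : 2 ≤ k) (hkn : k + 2 ≤ n) {A : Set (ZMod n)}
    (hA : ∀ i ∈ A, (i + 1) ∉ A ∧ (i - 1) ∉ A)
    (D : Finset (ZMod n)) (hD : D.card = k - 1) :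
    ∃ x ∉ D, (insert x D).card = k ∧ ∀ i ∈ A, insert x D ≠ cyclicInterval n k i := by
  classical
  have hcard : Fintype.card (ZMod n) = n := ZMod.card n
  set Bad := Dᶜ.filter (fun x => ∃ i ∈ A, insert x D = cyclicInterval n k i) with hBad
  have hb1 : Bad.card ≤ 1 := by
    rw [Finset.card_le_one]
    intro a ha b hb
    simp only [hBad, Finset.mem_filter, Finset.mem_compl] at ha hb
    obtain ⟨haD, i, hiA, hai⟩ := ha
    obtain ⟨hbD, j, hjA, hbj⟩ := hb
    have hij : i = j := by
      apply key_lemma hk hkn hA i hiA j hjA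
      have hsub : cyclicInterval n k i \ cyclicInterval n k j ⊆ {a} := by
        rw [← hai, ← hbj]
        intro z hz
        rw [Finset.mem_sdiff] at hz
        obtain ⟨hz1, hz2⟩ := hz
        rcases Finset.mem_insert.mp hz1 with h | h
        · simp [h]
        · exact absurd (Finset.mem_insert_of_mem h) hz2
      exact le_trans (Finset.card_le_card hsub) (by simp)
    rw [hij, ← hbj] at hai
    have hmem : a ∈ insert b D := hai ▸ Finset.mem_insert_self a D
    rcases Finset.mem_insert.mp hmem with h | h
    · exact h
    · exact absurd h haD
  have hDc : Dᶜ.card = n - (k - 1) := by rw [Finset.card_compl, hcard, hD]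
  have hsd := Finset.card_sdiff_of_subset (show Bad ⊆ Dᶜ from Finset.filter_subset _ _)
  obtain ⟨x, hx⟩ := Finset.card_pos.mp (show 0 < (Dᶜ \ Bad).card by omega)
  rw [Finset.mem_sdiff, Finset.mem_compl] at hx
  obtain ⟨hxD, hxBad⟩ := hx
  refine ⟨x, hxD, ?_, ?_⟩
  · rw [Finset.card_insert_of_notMem hxD, hD]; omega
  · intro i hi heq
    exact hxBad (Finset.mem_filter.mpr ⟨Finset.mem_compl.mpr hxD, i, hi, heq⟩)

/-- For an interval `X = C^{i₀}` and `x ∉ X`, some swap `insert x (X.erase y)` is a basis. -/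
lemma exists_swap_basis (hk : 2 ≤ k) (hkn : k + 2 ≤ n) {A : Set (ZMod n)}
    (hA : ∀ i ∈ A, (i + 1) ∉ A ∧ (i - 1) ∉ A) (i₀ : ZMod n) {x : ZMod n}
    (hx : x ∉ cyclicInterval n k i₀) :
    ∃ y ∈ cyclicInterval n k i₀,
      (insert x ((cyclicInterval n k i₀).erase y)).card = k ∧
      ∀ j ∈ A, insert x ((cyclicInterval n k i₀).erase y) ≠ cyclicInterval n k j := by
  classical
  set X := cyclicInterval n k i₀ with hX
  have hXc : X.card = k := card_cyclicInterval (by omega) i₀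
  set Bad := X.filter (fun y => ∃ j ∈ A, insert x (X.erase y) = cyclicInterval n k j) with hBad
  have hb1 : Bad.card ≤ 1 := by
    rw [Finset.card_le_one]
    intro y hy y' hy'
    simp only [hBad, Finset.mem_filter] at hy hy'
    obtain ⟨hyX, j, hjA, hyj⟩ := hy
    obtain ⟨hy'X, j', hj'A, hy'j⟩ := hy'
    have hjj : j = j' := by
      apply key_lemma hk hkn hA j hjA j' hj'A
      have hsub : cyclicInterval n k j \ cyclicInterval n k j' ⊆ {y'} := by
        rw [← hyj, ← hy'j]
        intro z hz
        rw [Finset.mem_sdiff] at hz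
        obtain ⟨hz1, hz2⟩ := hz
        rcases Finset.mem_insert.mp hz1 with h | h
        · exact absurd (Finset.mem_insert_self x _) (h ▸ hz2)
        · by_contra hzy'
          rw [Finset.mem_singleton] at hzy'
          refine hz2 (Finset.mem_insert_of_mem ?_)
          exact Finset.mem_erase.mpr ⟨hzy', (Finset.mem_erase.mp h).2⟩
      exact le_trans (Finset.card_le_card hsub) (by simp)
    rw [hjj, ← hy'j] at hyj
    by_contra hne
    have hm1 : y' ∈ insert x (X.erase y) :=
      Finset.mem_insert_of_mem (Finset.mem_erase.mpr ⟨fun h => hne h.symm, hy'X⟩)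
    rw [hyj] at hm1
    rcases Finset.mem_insert.mp hm1 with h | h
    · exact hx (h ▸ hy'X)
    · exact (Finset.mem_erase.mp h).1 rfl
  have hsd := Finset.card_sdiff_of_subset (show Bad ⊆ X from Finset.filter_subset _ _)
  obtain ⟨y, hy⟩ := Finset.card_pos.mp (show 0 < (X \ Bad).card by omega)
  rw [Finset.mem_sdiff] at hy
  obtain ⟨hyX, hyBad⟩ := hy
  have hxe : x ∉ X.erase y := fun h => hx (Finset.mem_erase.mp h).2
  refine ⟨y, hyX, ?_, ?_⟩
  · rw [Finset.card_insert_of_notMem hxe, Finset.card_erase_of_mem hyX, hXc]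
    omega
  · intro j hj heq
    exact hyBad (Finset.mem_filter.mpr ⟨hyX, j, hj, heq⟩)

end Ext

/-- For `2 ≤ k ≤ n - 2` and a non-adjacent `A ⊆ ZMod n`, the collection of `k`-subsets
of `ZMod n` different from every cyclic interval `C^{(i)}`, `i ∈ A`, is the basis family
of a matroid; this matroid is sparse paving, with non-bases precisely the sets
`C^{(i)}` for `i ∈ A`, and all of these non-bases are circuit-hyperplanes. -/
theorem nonAdjacent_gives_sparsePaving_matroid (n k : ℕ) (hk : 2 ≤ k) (hkn : k + 2 ≤ n)
    (A : Set (ZMod n)) (hA : ∀ i ∈ A, (i + 1) ∉ A ∧ (i - 1) ∉ A) :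
    ExchangeFamily {J : Finset (ZMod n) | J.card = k ∧ ∀ i ∈ A, J ≠ cyclicInterval n k i} ∧
    (∀ X : Finset (ZMod n), X.card = k →
      (X ∉ {J : Finset (ZMod n) | J.card = k ∧ ∀ i ∈ A, J ≠ cyclicInterval n k i} ↔
        ∃ i ∈ A, X = cyclicInterval n k i)) ∧
    (∀ X : Finset (ZMod n), X.card = k →
      X ∉ {J : Finset (ZMod n) | J.card = k ∧ ∀ i ∈ A, J ≠ cyclicInterval n k i} →
      IsCircuitHyperplaneIn
        {J : Finset (ZMod n) | J.card = k ∧ ∀ i ∈ A, J ≠ cyclicInterval n k i} X) := by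
    classical
  haveI : NeZero n := ⟨by omega⟩
  set Bfam : Set (Finset (ZMod n)) :=
    {J : Finset (ZMod n) | J.card = k ∧ ∀ i ∈ A, J ≠ cyclicInterval n k i} with hBfam
  -- basic membership
  have hmemB : ∀ J : Finset (ZMod n),
      J ∈ Bfam ↔ (J.card = k ∧ ∀ i ∈ A, J ≠ cyclicInterval n k i) := fun J => Iff.rfl
  -- independence of small sets
  have hind : ∀ Y : Finset (ZMod n), Y.card ≤ k - 1 → IndepIn Bfam Y := by
    intro Y hY
    obtain ⟨E, hYE, hE⟩ := Finset.exists_superset_card_eq (n := k - 1) hY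
      (by rw [ZMod.card]; omega)
    obtain ⟨x, hxE, hcard, hne⟩ := exists_extend hk hkn hA E hE
    exact ⟨insert x E, (hmemB _).mpr ⟨hcard, hne⟩,
      hYE.trans (Finset.subset_insert x E)⟩
  -- nonempty
  have hBne : Bfam.Nonempty := by
    obtain ⟨E, _, hE⟩ := Finset.exists_subset_card_eq (s := (Finset.univ : Finset (ZMod n))) (n := k - 1)
      (by rw [Finset.card_univ, ZMod.card]; omega)
    obtain ⟨x, hxE, hcard, hne⟩ := exists_extend hk hkn hA E hE
    exact ⟨insert x E, (hmemB _).mpr ⟨hcard, hne⟩⟩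
  -- bounded above (for rkIn)
  have hbdd : ∀ G : Finset (ZMod n), BddAbove ((fun b => (G ∩ b).card) '' Bfam) := by
    intro G
    refine ⟨k, ?_⟩
    rintro m ⟨b, hb, rfl⟩
    exact le_trans (Finset.card_le_card (Finset.inter_subset_right)) (le_of_eq ((hmemB b).mp hb).1)
  -- the exchange property
  have hexch : ∀ b₁ ∈ Bfam, ∀ b₂ ∈ Bfam, ∀ e ∈ b₁, e ∉ b₂ →
      ∃ f ∈ b₂, f ∉ b₁ ∧ insert f (b₁.erase e) ∈ Bfam := by
    intro b₁ hb₁ b₂ hb₂ e he heb₂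
    obtain ⟨hc₁, hne₁⟩ := (hmemB b₁).mp hb₁
    obtain ⟨hc₂, hne₂⟩ := (hmemB b₂).mp hb₂
    have hDcard : (b₁.erase e).card = k - 1 := by
      rw [Finset.card_erase_of_mem he, hc₁]
    have hins : ∀ f ∉ b₁, (insert f (b₁.erase e)).card = k := by
      intro f hf
      rw [Finset.card_insert_of_notMem (fun h => hf (Finset.mem_of_mem_erase h)), hDcard]
      omega
    by_cases hgood : ∃ f ∈ b₂ \ b₁, ∀ i ∈ A, insert f (b₁.erase e) ≠ cyclicInterval n k i
    · obtain ⟨f, hf, hgf⟩ := hgood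
      rw [Finset.mem_sdiff] at hf
      exact ⟨f, hf.1, hf.2, (hmemB _).mpr ⟨hins f hf.2, hgf⟩⟩
    · push_neg at hgood
      have hcard1 : (b₂ \ b₁).card ≤ 1 := by
        rw [Finset.card_le_one]
        intro f hf f' hf'
        obtain ⟨i, hiA, hi⟩ := hgood f hf
        obtain ⟨j, hjA, hj⟩ := hgood f' hf'
        rw [Finset.mem_sdiff] at hf hf'
        have hij : i = j := by
          apply key_lemma hk hkn hA i hiA j hjA
          have hsub : cyclicInterval n k i \ cyclicInterval n k j ⊆ {f} := by
            rw [← hi, ← hj]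
            intro z hz
            rw [Finset.mem_sdiff] at hz
            obtain ⟨hz1, hz2⟩ := hz
            rcases Finset.mem_insert.mp hz1 with h | h
            · simp [h]
            · exact absurd (Finset.mem_insert_of_mem h) hz2
          exact le_trans (Finset.card_le_card hsub) (by simp)
        rw [hij, ← hj] at hi
        have hm : f ∈ insert f' (b₁.erase e) := hi ▸ Finset.mem_insert_self f _
        rcases Finset.mem_insert.mp hm with h | h
        · exact h
        · exact absurd (Finset.mem_of_mem_erase h) hf.2
      have hcc : (b₁ \ b₂).card = (b₂ \ b₁).card := Finset.card_sdiff_comm (hc₁.trans hc₂.symm)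
      have he12 : e ∈ b₁ \ b₂ := Finset.mem_sdiff.mpr ⟨he, heb₂⟩
      have hec : ({e} : Finset (ZMod n)) ⊆ b₁ \ b₂ := Finset.singleton_subset_iff.mpr he12
      have hecard : 0 < (b₁ \ b₂).card := Finset.card_pos.mpr ⟨e, he12⟩
      have h12 : b₁ \ b₂ = {e} :=
        (Finset.eq_of_subset_of_card_le hec (by simp; omega)).symm
      obtain ⟨f, hfF⟩ := Finset.card_pos.mp (show 0 < (b₂ \ b₁).card by omega)
      rw [Finset.mem_sdiff] at hfF
      refine ⟨f, hfF.1, hfF.2, ?_⟩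
      have heq : insert f (b₁.erase e) = b₂ := by
        apply Finset.eq_of_subset_of_card_le
        · intro z hz
          rcases Finset.mem_insert.mp hz with h | h
          · exact h ▸ hfF.1
          · obtain ⟨hze, hzb₁⟩ := Finset.mem_erase.mp h
            by_contra hzb₂
            have : z ∈ b₁ \ b₂ := Finset.mem_sdiff.mpr ⟨hzb₁, hzb₂⟩
            rw [h12] at this
            exact hze (Finset.mem_singleton.mp this)
        · rw [hins f hfF.2, hc₂]
      rw [heq]
      exact hb₂
  refine ⟨⟨hBne, hexch⟩, ?_, ?_⟩
  · -- characterization of non-bases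
    intro X hX
    constructor
    · intro hXB
      rw [hmemB] at hXB
      push_neg at hXB
      exact hXB hX
    · rintro ⟨i, hiA, rfl⟩ hmem
      exact ((hmemB _).mp hmem).2 i hiA rfl
  · -- circuit-hyperplanes
    intro X hX hXB
    rw [hmemB] at hXB
    push_neg at hXB
    obtain ⟨i₀, hi₀A, hXeq⟩ := hXB hX
    subst hXeq
    set X := cyclicInterval n k i₀ with hXdef
    have hXc : X.card = k := card_cyclicInterval (by omega) i₀
    -- X is dependent
    have hdep : ¬ IndepIn Bfam X := by
      rintro ⟨b, hb, hXb⟩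
      obtain ⟨hbc, hbne⟩ := (hmemB b).mp hb
      have : X = b := Finset.eq_of_subset_of_card_le hXb (by omega)
      exact hbne i₀ hi₀A this.symm
    -- rank of intersections with X is at most k - 1
    have hrk_le : ∀ b ∈ Bfam, (X ∩ b).card ≤ k - 1 := by
      intro b hb
      by_contra hlt
      push_neg at hlt
      have h1 : (X ∩ b).card ≤ k := le_trans (Finset.card_le_card Finset.inter_subset_left)
        (le_of_eq hXc)
      have h2 : X ∩ b = X := Finset.eq_of_subset_of_card_le Finset.inter_subset_left (by omega)
      exact hdep ⟨b, hb, by rw [← h2]; exact Finset.inter_subset_right⟩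
    -- a basis meeting X in k - 1 elements
    have hrk_ge : ∃ b ∈ Bfam, (X ∩ b).card = k - 1 := by
      have hXne : X.Nonempty := Finset.card_pos.mp (by omega)
      obtain ⟨x₀, hx₀⟩ := hXne
      have hYc : (X.erase x₀).card = k - 1 := by rw [Finset.card_erase_of_mem hx₀, hXc]
      obtain ⟨x, hxE, hcard, hne⟩ := exists_extend hk hkn hA (X.erase x₀) hYc
      refine ⟨insert x (X.erase x₀), (hmemB _).mpr ⟨hcard, hne⟩, ?_⟩
      have hsub : X.erase x₀ ⊆ X ∩ insert x (X.erase x₀) := by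
        intro z hz
        exact Finset.mem_inter.mpr ⟨Finset.mem_of_mem_erase hz, Finset.mem_insert_of_mem hz⟩
      have hge : k - 1 ≤ (X ∩ insert x (X.erase x₀)).card := hYc ▸ Finset.card_le_card hsub
      have hle := hrk_le _ ((hmemB _).mpr ⟨hcard, hne⟩)
      omega
    -- rkIn of X
    have hrkX : rkIn Bfam X = k - 1 := by
      apply le_antisymm
      · apply csSup_le
        · obtain ⟨b, hb⟩ := hBne
          exact ⟨(X ∩ b).card, b, hb, rfl⟩
        · rintro m ⟨b, hb, rfl⟩
          exact hrk_le b hb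
      · obtain ⟨b, hb, hbcard⟩ := hrk_ge
        exact le_csSup (hbdd X) ⟨b, hb, hbcard⟩
    -- rankM
    have hrank : rankM Bfam = k := by
      apply le_antisymm
      · apply csSup_le
        · obtain ⟨b, hb⟩ := hBne
          exact ⟨b.card, b, hb, rfl⟩
        · rintro m ⟨b, hb, rfl⟩
          exact le_of_eq ((hmemB b).mp hb).1
      · obtain ⟨b, hb⟩ := hBne
        exact le_csSup ⟨k, by rintro m ⟨b', hb', rfl⟩; exact le_of_eq ((hmemB b').mp hb').1⟩
          ⟨b, hb, ((hmemB b).mp hb).1⟩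
    refine ⟨⟨hdep, ?_⟩, ?_, ?_⟩
    · -- minimality: proper subsets are independent
      intro Y hY
      have : Y.card < k := hXc ▸ Finset.card_lt_card hY
      exact hind Y (by omega)
    · -- flat
      intro G hG
      obtain ⟨x, hxG, hxX⟩ := Finset.exists_of_ssubset hG
      obtain ⟨y, hyX, hScard, hSne⟩ := exists_swap_basis hk hkn hA i₀ hxX
      set S := insert x (X.erase y) with hSdef
      have hSB : S ∈ Bfam := (hmemB _).mpr ⟨hScard, hSne⟩
      have hSG : S ⊆ G := by
        intro z hz
        rcases Finset.mem_insert.mp hz with h | h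
        · exact h ▸ hxG
        · exact hG.1 (Finset.mem_of_mem_erase h)
      have hGS : G ∩ S = S := Finset.inter_eq_right.mpr hSG
      have hk_le : k ≤ rkIn Bfam G := by
        refine le_csSup (hbdd G) ⟨S, hSB, ?_⟩
        show (G ∩ S).card = k
        rw [hGS, hScard]
      rw [hrkX]
      omega
    · rw [hrkX, hrank]
      omega
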